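/- Let Q be a reduced word for v with last letter r_α, and Q' = Q minus its last letter. If w r_α < w and w ≰ v r_α, then no face of Δ(Q,w) contains the last position ℓ(v), and Δ(Q,w) = Δ(Q', w r_α) (as complexes on the first ℓ(v)−1 positions). -/

import Mathlib

open List

set_option linter.unusedSectionVars false
set_option maxHeartbeats 1000000


variable {B W : Type*} [DecidableEq B] [Group W] {M : CoxeterMatrix B} (cs : CoxeterSystem M W)

/-- The Bruhat order on a Coxeter group, via the subword property:
`u ≤ v` iff every reduced word for `v` contains a subword that is a reduced word for `u`. -/
def BruhatLe (u v : W) : Prop :=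
  ∀ Q : List B, cs.IsReduced Q → cs.wordProd Q = v →
    ∃ P : List B, P.Sublist Q ∧ cs.IsReduced P ∧ cs.wordProd P = u

/-- The Demazure product of a word in the simple reflections: multiply the letters in
order, omitting any letter that would decrease the length. -/
noncomputable def Dem (Q : List B) : W :=
  Q.foldl (fun w b => if cs.length w < cs.length (w * cs.simple b) then w * cs.simple b else w) 1

/-- The subword of `Q` obtained by deleting the letters at the positions in `F`
(positions are `0`-indexed); this is the complementary subword `Q ∖ F`. -/
def dmask (Q : List B) (F : Finset ℕ) : List B :=
  (Q.zipIdx.filter fun p => p.2 ∉ F).map Prod.fst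

/-- The subword of `Q` consisting of the letters at the positions in `F` (in order). -/
def smask (Q : List B) (F : Finset ℕ) : List B :=
  (Q.zipIdx.filter fun p => p.2 ∈ F).map Prod.fst

/-- `F` is a face of the subword complex `Δ(Q,w)`: `F` is a set of positions of `Q` such
that the complementary subword `Q ∖ F` contains a reduced word for `w`. -/
def IsFace (Q : List B) (w : W) (F : Finset ℕ) : Prop :=
  F ⊆ Finset.range Q.length ∧
    ∃ P : List B, P.Sublist (dmask Q F) ∧ cs.IsReduced P ∧ cs.wordProd P = w

/-- `F` is a facet (maximal face) of the subword complex `Δ(Q,w)`. -/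
def IsFacet (Q : List B) (w : W) (F : Finset ℕ) : Prop :=
  IsFace cs Q w F ∧ ∀ F' : Finset ℕ, IsFace cs Q w F' → F ⊆ F' → F' = F


set_option linter.unusedSectionVars false

open scoped Classical in
/-- indicator function of `x`, valued in `Multiplicative (ZMod 2)`. -/
noncomputable def BrDelta (x : W) : W → Multiplicative (ZMod 2) :=
  fun t => if t = x then Multiplicative.ofAdd 1 else 1

/-- product of indicators over a list -/
noncomputable def BrDl (L : List W) : W → Multiplicative (ZMod 2) :=
  (L.map BrDelta).prod

/-- conjugation action of `W` on `W → Multiplicative (ZMod 2)` -/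
def BrRho : W →* MulAut (W → Multiplicative (ZMod 2)) where
  toFun w :=
    { toFun := fun f t => f (w⁻¹ * t * w)
      invFun := fun f t => f (w * t * w⁻¹)
      left_inv := fun f => by funext t; group
      right_inv := fun f => by funext t; group
      map_mul' := fun f g => rfl }
  map_one' := by ext f t; simp
  map_mul' := fun a b => by ext f t; simp [mul_assoc]

theorem BrRho_apply (w : W) (f : W → Multiplicative (ZMod 2)) (t : W) :
    BrRho w f t = f (w⁻¹ * t * w) := rfl

theorem BrRho_delta (u x : W) : BrRho u (BrDelta x) = BrDelta (u * x * u⁻¹) := by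
  classical
  funext t
  rw [BrRho_apply]
  unfold BrDelta
  have : u⁻¹ * t * u = x ↔ t = u * x * u⁻¹ := by
    constructor
    · intro h; rw [← h]; group
    · intro h; rw [h]; group
  simp only [this]

@[simp] theorem BrDl_nil : BrDl ([] : List W) = 1 := rfl

theorem BrDl_cons (x : W) (L : List W) : BrDl (x :: L) = BrDelta x * BrDl L := by
  simp [BrDl]

theorem BrDl_append (L L' : List W) : BrDl (L ++ L') = BrDl L * BrDl L' := by
  simp [BrDl, mul_comm]

theorem BrDl_map_conj (u : W) (L : List W) :
    BrDl (L.map (MulAut.conj u)) = BrRho u (BrDl L) := by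
  induction L with
  | nil => simp
  | cons x L ih =>
    rw [map_cons, BrDl_cons, BrDl_cons, map_mul, ih, BrRho_delta, MulAut.conj_apply]

theorem BrDl_apply_of_not_mem {L : List W} {t : W} (h : t ∉ L) : BrDl L t = 1 := by
  classical
  induction L with
  | nil => rfl
  | cons x L ih =>
    rw [BrDl_cons]
    have hx : t ≠ x := fun hh => h (hh ▸ mem_cons_self)
    have : BrDelta x t = 1 := by simp [BrDelta, hx]
    have h2 : BrDl L t = 1 := ih (fun hh => h (mem_cons_of_mem _ hh))
    show BrDelta x t * BrDl L t = 1
    rw [this, h2, mul_one]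

/-- the generator images in the semidirect product -/
noncomputable def BrGen (i : B) : (W → Multiplicative (ZMod 2)) ⋊[BrRho] W :=
  ⟨BrDelta (cs.simple i), cs.simple i⟩

theorem BrGen_prod (ω : List B) :
    (ω.map (BrGen cs)).prod = ⟨BrDl (cs.leftInvSeq ω), cs.wordProd ω⟩ := by
  induction ω with
  | nil => simp [BrDl]
  | cons i ω ih =>
    rw [map_cons, prod_cons, ih, BrGen, SemidirectProduct.mul_def]
    have h1 : BrDelta (cs.simple i) * BrRho (cs.simple i) (BrDl (cs.leftInvSeq ω))
        = BrDl (cs.leftInvSeq (i :: ω)) := by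
      rw [← BrDl_map_conj, CoxeterSystem.leftInvSeq, BrDl_cons]
    have h2 : cs.simple i * cs.wordProd ω = cs.wordProd (i :: ω) := (cs.wordProd_cons i ω).symm
    rw [h1, h2]

/-- word `[i,j,i,j,...]` of length `2n` -/
def altR (i j : B) : ℕ → List B
  | 0 => []
  | n + 1 => altR i j n ++ [i, j]

theorem prod_map_altR {G : Type*} [Monoid G] (f : B → G) (i j : B) (n : ℕ) :
    ((altR i j n).map f).prod = (f i * f j) ^ n := by
  induction n with
  | zero => simp [altR]
  | succ n ih => simp [altR, ih, pow_succ, mul_assoc]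

theorem wordProd_altR (i j : B) (n : ℕ) :
    cs.wordProd (altR i j n) = (cs.simple i * cs.simple j) ^ n := by
  have := prod_map_altR (cs.simple) i j n
  rw [CoxeterSystem.wordProd]
  exact this

theorem simple_mul_pow (i j : B) (n : ℕ) :
    cs.simple i * (cs.simple j * cs.simple i) ^ n
      = (cs.simple i * cs.simple j) ^ n * cs.simple i := by
  induction n with
  | zero => simp
  | succ n ih =>
    rw [pow_succ, pow_succ, ← mul_assoc, ih]
    group

theorem simple_mul_pow' (i j : B) (n : ℕ) :
    cs.simple i * ((cs.simple i * cs.simple j) ^ n)⁻¹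
      = (cs.simple i * cs.simple j) ^ n * cs.simple i := by
  have : ((cs.simple i * cs.simple j) ^ n)⁻¹ = (cs.simple j * cs.simple i) ^ n := by
    rw [← inv_pow]
    congr 1
    rw [mul_inv_rev, cs.inv_simple, cs.inv_simple]
  rw [this, simple_mul_pow]

theorem leftInvSeq_altR (i j : B) (n : ℕ) :
    cs.leftInvSeq (altR i j n)
      = (List.range (2 * n)).map (fun k => (cs.simple i * cs.simple j) ^ k * cs.simple i) := by
  induction n with
  | zero => simp [altR]
  | succ n ih =>
    have h1 : altR i j (n + 1) = ((altR i j n) ++ [i]) ++ [j] := by simp [altR]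
    have e1 : cs.leftInvSeq ((altR i j n) ++ [i])
        = cs.leftInvSeq (altR i j n)
          ++ [cs.wordProd (altR i j n) * cs.simple i * (cs.wordProd (altR i j n))⁻¹] := by
      have := cs.leftInvSeq_concat (altR i j n) i
      simpa [List.concat_eq_append] using this
    have e2 : cs.leftInvSeq (((altR i j n) ++ [i]) ++ [j])
        = cs.leftInvSeq ((altR i j n) ++ [i])
          ++ [cs.wordProd ((altR i j n) ++ [i]) * cs.simple j
              * (cs.wordProd ((altR i j n) ++ [i]))⁻¹] := by
      have := cs.leftInvSeq_concat ((altR i j n) ++ [i]) j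
      simpa [List.concat_eq_append] using this
    rw [h1, e2, e1, ih]
    have hr : 2 * (n + 1) = (2 * n + 1) + 1 := by ring
    rw [hr, List.range_succ, List.range_succ]
    set c := cs.simple i * cs.simple j with hc
    have hπ : cs.wordProd (altR i j n) = c ^ n := wordProd_altR cs i j n
    have hπ2 : cs.wordProd ((altR i j n) ++ [i]) = c ^ n * cs.simple i := by
      rw [cs.wordProd_append, hπ, cs.wordProd_singleton]
    have key1 : c ^ n * cs.simple i * (c ^ n)⁻¹ = c ^ (2 * n) * cs.simple i := by
      rw [mul_assoc, simple_mul_pow' cs i j n, ← mul_assoc, ← pow_add]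
      congr 2
      ring
    have h4 : cs.simple i * (c ^ n)⁻¹ = c ^ n * cs.simple i := simple_mul_pow' cs i j n
    have key2 : (c ^ n * cs.simple i) * cs.simple j * (c ^ n * cs.simple i)⁻¹
        = c ^ (2 * n + 1) * cs.simple i := by
      have hexp : n + 1 + n = 2 * n + 1 := by ring
      calc (c ^ n * cs.simple i) * cs.simple j * (c ^ n * cs.simple i)⁻¹
          = (c ^ n * c) * (cs.simple i * (c ^ n)⁻¹) := by
            rw [mul_inv_rev, cs.inv_simple, hc]; group
        _ = c ^ (n + 1) * (c ^ n * cs.simple i) := by rw [h4, pow_succ]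
        _ = c ^ (2 * n + 1) * cs.simple i := by rw [← mul_assoc, ← pow_add, hexp]
    rw [hπ, hπ2, key1, key2]
    simp [List.map_append]

theorem sq_one (f : W → Multiplicative (ZMod 2)) : f * f = 1 := by
  funext t
  show f t * f t = 1
  have : ∀ a : Multiplicative (ZMod 2), a * a = 1 := by decide
  exact this (f t)

theorem BrGen_liftable : M.IsLiftable (BrGen cs) := by
  intro i j
  have h1 : (BrGen cs i * BrGen cs j) ^ M i j
      = ((altR i j (M i j)).map (BrGen cs)).prod := (prod_map_altR (BrGen cs) i j (M i j)).symm
  rw [h1, BrGen_prod]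
  have h2 : cs.wordProd (altR i j (M i j)) = 1 := by
    rw [wordProd_altR]; exact cs.simple_mul_simple_pow i j
  have h3 : BrDl (cs.leftInvSeq (altR i j (M i j))) = 1 := by
    rw [leftInvSeq_altR]
    set g := fun k => (cs.simple i * cs.simple j) ^ k * cs.simple i with hg
    have hper : ∀ k, g (M i j + k) = g k := by
      intro k
      simp only [hg]
      rw [add_comm, pow_add, cs.simple_mul_simple_pow i j, mul_one]
    have : 2 * M i j = M i j + M i j := by ring
    rw [this, List.range_add, List.map_append, List.map_map]
    have : (List.range (M i j)).map (g ∘ (fun k => M i j + k))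
        = (List.range (M i j)).map g := by
      apply List.map_congr_left
      intro k _
      exact hper k
    rw [this, BrDl_append, sq_one]
  rw [h2, h3]
  rfl

/-- the sign representation homomorphism -/
noncomputable def BrSgn : W →* (W → Multiplicative (ZMod 2)) ⋊[BrRho] W :=
  cs.lift ⟨BrGen cs, BrGen_liftable cs⟩

theorem BrSgn_wordProd (ω : List B) :
    BrSgn cs (cs.wordProd ω) = ⟨BrDl (cs.leftInvSeq ω), cs.wordProd ω⟩ := by
  rw [CoxeterSystem.wordProd, map_list_prod, List.map_map]
  have : (ω.map (⇑(BrSgn cs) ∘ cs.simple)) = ω.map (BrGen cs) := by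
    apply List.map_congr_left
    intro i _
    exact cs.lift_apply_simple (BrGen_liftable cs) i
  rw [this, BrGen_prod]
  rfl

theorem BrDl_leftInvSeq_eq {ω ω' : List B} (h : cs.wordProd ω = cs.wordProd ω') :
    BrDl (cs.leftInvSeq ω) = BrDl (cs.leftInvSeq ω') := by
  have h1 := BrSgn_wordProd cs ω
  have h2 := BrSgn_wordProd cs ω'
  rw [h] at h1
  simpa using congrArg SemidirectProduct.left (h1.symm.trans h2)

theorem leftInvSeq_append' (σ σ' : List B) :
    cs.leftInvSeq (σ ++ σ')
      = cs.leftInvSeq σ ++ (cs.leftInvSeq σ').map (MulAut.conj (cs.wordProd σ)) := by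
  induction σ with
  | nil =>
    simp only [List.nil_append, CoxeterSystem.leftInvSeq_nil, cs.wordProd_nil]
    rw [map_one]
    simp
  | cons a σ ih =>
    show cs.leftInvSeq (a :: (σ ++ σ')) = _
    rw [CoxeterSystem.leftInvSeq, ih, List.map_append, List.map_map]
    rw [CoxeterSystem.leftInvSeq]
    rw [cs.wordProd_cons, map_mul]
    rfl

theorem BrDl_map_conj_apply (u : W) (L : List W) (t : W) :
    BrDl (L.map (MulAut.conj u)) t = BrDl L (u⁻¹ * t * u) := by
  rw [BrDl_map_conj]
  rfl

/-- the key parity lemma: in the inversion sequence of a palindromic word for a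
reflection, the reflection appears an odd number of times -/
theorem BrDl_palindrome (υ : List B) (i : B) :
    BrDl (cs.leftInvSeq (υ ++ [i] ++ υ.reverse))
      (cs.wordProd υ * cs.simple i * (cs.wordProd υ)⁻¹)
    = Multiplicative.ofAdd 1 := by
  classical
  induction υ with
  | nil =>
    simp only [List.nil_append, List.reverse_nil, List.append_nil, cs.wordProd_nil,
      one_mul, inv_one, mul_one]
    rw [CoxeterSystem.leftInvSeq_singleton, BrDl_cons]
    show BrDelta (cs.simple i) (cs.simple i) * BrDl [] (cs.simple i) = _
    simp [BrDelta, BrDl]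
  | cons j υ' ih =>
    set t' := cs.wordProd υ' * cs.simple i * (cs.wordProd υ')⁻¹ with ht'
    set τ' := υ' ++ [i] ++ υ'.reverse with hτ'
    have hπτ' : cs.wordProd τ' = t' := by
      rw [hτ', cs.wordProd_append, cs.wordProd_append, cs.wordProd_singleton,
        cs.wordProd_reverse, ht']
    have hword : (j :: υ') ++ [i] ++ (j :: υ').reverse = j :: (τ' ++ [j]) := by
      simp [hτ']
    have ht : cs.wordProd (j :: υ') * cs.simple i * (cs.wordProd (j :: υ'))⁻¹
        = cs.simple j * t' * cs.simple j := by
      rw [cs.wordProd_cons, ht', mul_inv_rev, cs.inv_simple]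
      group
    rw [hword, ht]
    rw [CoxeterSystem.leftInvSeq]
    have hconcat : cs.leftInvSeq (τ' ++ [j])
        = cs.leftInvSeq τ' ++ [cs.wordProd τ' * cs.simple j * (cs.wordProd τ')⁻¹] := by
      have := cs.leftInvSeq_concat τ' j
      simpa [List.concat_eq_append] using this
    rw [hconcat, List.map_append, BrDl_cons, BrDl_append]
    show BrDelta (cs.simple j) _ * (BrDl ((cs.leftInvSeq τ').map (MulAut.conj (cs.simple j))) _
      * BrDl _ _) = _
    rw [BrDl_map_conj_apply]
    have harg : (cs.simple j)⁻¹ * (cs.simple j * t' * cs.simple j) * cs.simple j = t' := by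
      simp [cs.inv_simple, mul_assoc, cs.simple_mul_simple_self, cs.simple_mul_simple_cancel_left]
    rw [harg, hπτ']
    have hmid : BrDl (cs.leftInvSeq τ') t' = Multiplicative.ofAdd 1 := ih
    rw [hmid]
    simp only [List.map_cons, List.map_nil]
    by_cases hcase : t' = cs.simple j
    · have e1 : BrDelta (cs.simple j) (cs.simple j * t' * cs.simple j)
          = Multiplicative.ofAdd 1 := by
        rw [hcase]
        simp [BrDelta, cs.simple_mul_simple_self]
      have hval : (MulAut.conj (cs.simple j)) (t' * cs.simple j * t'⁻¹) = cs.simple j := by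
        rw [hcase]
        simp
      have e2 : BrDl [(MulAut.conj (cs.simple j)) (t' * cs.simple j * t'⁻¹)]
          (cs.simple j * t' * cs.simple j) = Multiplicative.ofAdd 1 := by
        rw [hval, BrDl_cons, hcase]
        show BrDelta (cs.simple j) _ * BrDl [] _ = _
        have harg2 : cs.simple j * cs.simple j * cs.simple j = cs.simple j := by
          rw [cs.simple_mul_simple_self, one_mul]
        rw [harg2]
        simp [BrDelta, BrDl]
      rw [e1, e2]
      decide
    · have e1 : BrDelta (cs.simple j) (cs.simple j * t' * cs.simple j) = 1 := by
        have hne0 : cs.simple j * t' * cs.simple j ≠ cs.simple j := by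
          intro hh
          apply hcase
          rw [← harg, hh]
          simp
        simp [BrDelta, hne0]
      have e2 : BrDl [(MulAut.conj (cs.simple j)) (t' * cs.simple j * t'⁻¹)]
          (cs.simple j * t' * cs.simple j) = 1 := by
        have hne2 : ¬ t' = t' * cs.simple j * t'⁻¹ := by
          intro h2
          apply hcase
          have h3 : t' * t' = t' * cs.simple j := by
            nth_rewrite 1 [h2]
            rw [inv_mul_cancel_right]
          exact mul_left_cancel h3
        have hne : cs.simple j * t' * cs.simple j
            ≠ (MulAut.conj (cs.simple j)) (t' * cs.simple j * t'⁻¹) := by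
          intro hh
          apply hne2
          rw [MulAut.conj_apply, cs.inv_simple] at hh
          have h1 : cs.simple j * t' = cs.simple j * (t' * cs.simple j * t'⁻¹) :=
            mul_right_cancel hh
          exact mul_left_cancel h1
        have hd : BrDelta ((MulAut.conj (cs.simple j)) (t' * cs.simple j * t'⁻¹))
            (cs.simple j * t' * cs.simple j) = 1 := by
          simp [BrDelta, hne, hne2]
        rw [BrDl_cons]
        show BrDelta ((MulAut.conj (cs.simple j)) (t' * cs.simple j * t'⁻¹))
            (cs.simple j * t' * cs.simple j)
          * BrDl [] (cs.simple j * t' * cs.simple j) = 1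
        rw [hd]
        simp [BrDl]
      rw [e1, e2]
      decide

/-- Strong exchange, left membership version: for any word, if `t` is a left inversion of
its product, then `t` occurs in the left inversion sequence. -/
theorem mem_leftInvSeq_of_isLeftInversion (ω : List B) {t : W}
    (ht : cs.IsReflection t) (hlt : cs.length (t * cs.wordProd ω) < cs.length (cs.wordProd ω)) :
    t ∈ cs.leftInvSeq ω := by
  classical
  obtain ⟨u, i, rfl⟩ := ht
  set t := u * cs.simple i * u⁻¹ with htdef
  obtain ⟨υ, hυred, hυ⟩ := cs.exists_reduced_word' u
  obtain ⟨σ, hσred, hσ⟩ := cs.exists_reduced_word' (t * cs.wordProd ω)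
  set τ : List B := υ ++ [i] ++ υ.reverse with hτ
  have hπτ : cs.wordProd τ = t := by
    rw [hτ, cs.wordProd_append, cs.wordProd_append, cs.wordProd_singleton,
      cs.wordProd_reverse, ← hυ, htdef]
  have htt : t * t = 1 := by
    rw [htdef]
    have h2 : u * cs.simple i * u⁻¹ * (u * cs.simple i * u⁻¹)
        = u * (cs.simple i * cs.simple i) * u⁻¹ := by group
    rw [h2, cs.simple_mul_simple_self, mul_one, mul_inv_cancel]
  have hπ : cs.wordProd (τ ++ σ) = cs.wordProd ω := by
    rw [cs.wordProd_append, hπτ, ← hσ, ← mul_assoc, htt, one_mul]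
  have hDl := BrDl_leftInvSeq_eq cs hπ
  have hsplit : cs.leftInvSeq (τ ++ σ)
      = cs.leftInvSeq τ ++ (cs.leftInvSeq σ).map (MulAut.conj (cs.wordProd τ)) :=
    leftInvSeq_append' cs τ σ
  -- evaluate both sides at t
  have hτodd : BrDl (cs.leftInvSeq τ) t = Multiplicative.ofAdd 1 := by
    have := BrDl_palindrome cs υ i
    rw [← hυ] at this
    exact this
  have hσzero : BrDl ((cs.leftInvSeq σ).map (MulAut.conj (cs.wordProd τ))) t = 1 := by
    rw [hπτ, BrDl_map_conj_apply]
    apply BrDl_apply_of_not_mem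
    intro hmem
    have hinv := cs.isLeftInversion_of_mem_leftInvSeq hσred hmem
    rw [← hσ] at hinv
    have h1 : t⁻¹ * t * t = t := by group
    rw [h1] at hinv
    obtain ⟨-, hlen⟩ := hinv
    rw [← mul_assoc, htt, one_mul] at hlen
    omega
  have : BrDl (cs.leftInvSeq ω) t = Multiplicative.ofAdd 1 := by
    rw [← hDl, hsplit, BrDl_append]
    show BrDl (cs.leftInvSeq τ) t * BrDl _ t = _
    rw [hτodd, hσzero, mul_one]
  by_contra hmem
  rw [BrDl_apply_of_not_mem hmem] at this
  exact absurd this (by decide)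

/-- Strong exchange, right version. -/
theorem exchange_right (ω : List B) {t : W}
    (ht : cs.IsReflection t)
    (hlt : cs.length (cs.wordProd ω * t) < cs.length (cs.wordProd ω)) :
    ∃ j, j < ω.length ∧ cs.wordProd (ω.eraseIdx j) = cs.wordProd ω * t := by
  have hrev : cs.length (t * cs.wordProd ω.reverse) < cs.length (cs.wordProd ω.reverse) := by
    rw [cs.wordProd_reverse]
    have h1 : t * (cs.wordProd ω)⁻¹ = (cs.wordProd ω * t⁻¹)⁻¹ := by group
    rw [h1, cs.length_inv, cs.length_inv, ht.inv]
    exact hlt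
  have hmem := mem_leftInvSeq_of_isLeftInversion cs ω.reverse ht hrev
  rw [cs.leftInvSeq_reverse] at hmem
  rw [List.mem_reverse] at hmem
  obtain ⟨j, hj, hget⟩ := List.mem_iff_getElem.mp hmem
  rw [cs.length_rightInvSeq] at hj
  refine ⟨j, hj, ?_⟩
  have := cs.wordProd_mul_getD_rightInvSeq ω j
  rw [List.getD_eq_getElem _ 1 (by rw [cs.length_rightInvSeq]; exact hj)] at this
  rw [hget] at this
  exact this.symm

/-- Deletion property: every word contains a reduced sublist with the same product. -/
theorem exists_reduced_sublist (ω : List B) :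
    ∃ P : List B, P.Sublist ω ∧ cs.IsReduced P ∧ cs.wordProd P = cs.wordProd ω := by
  induction ω using List.reverseRecOn with
  | nil => exact ⟨[], List.Sublist.refl _, by simp [CoxeterSystem.IsReduced], rfl⟩
  | append_singleton ω c ih =>
    obtain ⟨P, hsub, hred, hprod⟩ := ih
    rcases cs.length_mul_simple (cs.wordProd P) c with hup | hdown
    · refine ⟨P ++ [c], hsub.append (List.Sublist.refl _), ?_, ?_⟩
      · show cs.length (cs.wordProd (P ++ [c])) = (P ++ [c]).length
        rw [cs.wordProd_append, cs.wordProd_singleton, hup, hred]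
        simp
      · rw [cs.wordProd_append, cs.wordProd_append, hprod]
    · -- descent: use exchange
      have hlt : cs.length (cs.wordProd P * cs.simple c) < cs.length (cs.wordProd P) := by
        omega
      obtain ⟨j, hj, hprod'⟩ := exchange_right cs P (cs.isReflection_simple c) hlt
      refine ⟨P.eraseIdx j,
        ((List.eraseIdx_sublist P j).trans hsub).trans (List.sublist_append_left ω [c]), ?_, ?_⟩
      · show cs.length (cs.wordProd (P.eraseIdx j)) = (P.eraseIdx j).length
        rw [hprod']
        have hlen := List.length_eraseIdx_add_one hj
        have hred' : cs.length (cs.wordProd P) = P.length := hred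
        omega
      · rw [hprod', cs.wordProd_append, cs.wordProd_singleton, hprod]

/-- chains in the Bruhat order, with increasing length, of a given number of steps -/
inductive BrChainN (cs : CoxeterSystem M W) : ℕ → W → W → Prop
  | refl (x : W) : BrChainN cs 0 x x
  | step {n : ℕ} {x y : W} (t : W) : BrChainN cs n x y → cs.IsReflection t →
      cs.length y < cs.length (y * t) → BrChainN cs (n + 1) x (y * t)

def BrChain (x y : W) : Prop := ∃ n, BrChainN cs n x y

theorem BrChainN.trans {n m : ℕ} {x y z : W} (h1 : BrChainN cs n x y)
    (h2 : BrChainN cs m y z) : BrChainN cs (n + m) x z := by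
  induction h2 with
  | refl => exact h1
  | step t h ht hl ih => exact BrChainN.step t (ih h1) ht hl

theorem BrChain.trans {x y z : W} (h1 : BrChain cs x y) (h2 : BrChain cs y z) :
    BrChain cs x z := by
  obtain ⟨n, h1⟩ := h1
  obtain ⟨m, h2⟩ := h2
  exact ⟨n + m, BrChainN.trans cs h1 h2⟩

theorem BrChain.refl (x : W) : BrChain cs x x := ⟨0, BrChainN.refl x⟩

theorem BrChain.step {x y : W} (t : W) (h : BrChain cs x y) (ht : cs.IsReflection t)
    (hl : cs.length y < cs.length (y * t)) : BrChain cs x (y * t) := by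
  obtain ⟨n, h⟩ := h
  exact ⟨n + 1, BrChainN.step t h ht hl⟩

theorem BrChainN_zero {x y : W} (h : BrChainN cs 0 x y) : x = y := by
  cases h
  rfl

/-- Chain implies the subword property form of Bruhat order. -/
theorem bruhatLe_of_brChainN (n : ℕ) (u v : W) (h : BrChainN cs n u v) :
    BruhatLe cs u v := by
  induction h with
  | refl x =>
    intro Q hQred hQprod
    exact ⟨Q, List.Sublist.refl Q, hQred, hQprod⟩
  | @step m x y t h ht hl ih =>
    intro Q hQred hQprod
    have hlt : cs.length (cs.wordProd Q * t) < cs.length (cs.wordProd Q) := by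
      rw [hQprod]
      have : y * t * t = y := by
        rw [mul_assoc, ht.mul_self, mul_one]
      rw [this]
      exact hl
    obtain ⟨j, hj, hprod'⟩ := exchange_right cs Q ht hlt
    have hyeq : cs.wordProd (Q.eraseIdx j) = y := by
      rw [hprod', hQprod, mul_assoc, ht.mul_self, mul_one]
    obtain ⟨R, hRsub, hRred, hRprod⟩ := exists_reduced_sublist cs (Q.eraseIdx j)
    rw [hyeq] at hRprod
    obtain ⟨P, hPsub, hPred, hPprod⟩ := ih R hRred hRprod
    exact ⟨P, (hPsub.trans hRsub).trans (List.eraseIdx_sublist Q j), hPred, hPprod⟩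

mutual

/-- Lifting, up-up case: appending a common ascent to a chain. -/
theorem chain_mul_simple (c : B) (x y : W) (n : ℕ) (h : BrChainN cs n x y)
    (hx : cs.length x < cs.length (x * cs.simple c))
    (hy : cs.length y < cs.length (y * cs.simple c)) :
    BrChain cs (x * cs.simple c) (y * cs.simple c) := by
  cases h with
  | refl => exact BrChain.refl cs _
  | @step n' x' y₀ t h0 ht hl =>
    by_cases hy0 : cs.length y₀ < cs.length (y₀ * cs.simple c)
    · have ih := chain_mul_simple c x y₀ n' h0 hx hy0
      have ht' : cs.IsReflection (cs.simple c * t * cs.simple c) := by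
        have := ht.conj (cs.simple c)
        rwa [cs.inv_simple] at this
      have key : (y₀ * cs.simple c) * (cs.simple c * t * cs.simple c)
          = (y₀ * t) * cs.simple c := by
        simp [mul_assoc, cs.simple_mul_simple_cancel_left]
      have hlen : cs.length (y₀ * cs.simple c)
          < cs.length ((y₀ * cs.simple c) * (cs.simple c * t * cs.simple c)) := by
        rw [key]
        have h1 : cs.length (y₀ * cs.simple c) = cs.length y₀ + 1 := by
          rcases cs.length_mul_simple y₀ c with h' | h' <;> omega
        omega
      have := BrChain.step cs (cs.simple c * t * cs.simple c) ih ht' hlen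
      rwa [key] at this
    · have hy0' : cs.length (y₀ * cs.simple c) < cs.length y₀ := by
        rcases cs.length_mul_simple y₀ c with h' | h' <;> omega
      have ih := chain_absorb c x y₀ n' h0 hx hy0'
      exact (ih.step cs t ht hl).step cs (cs.simple c) (cs.isReflection_simple c) hy
termination_by (cs.length y, 0, n)
decreasing_by
  all_goals simp_wf
  all_goals subst_vars
  all_goals try simp only [List.length_append, List.length_singleton, List.length_concat]
  all_goals
    first
      | (apply Prod.Lex.left
         omega)
      | (apply Prod.Lex.right
         apply Prod.Lex.right
         omega)

/-- Lifting, up-down case: absorbing an ascent of `x` into a chain whose top has a descent. -/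
theorem chain_absorb (c : B) (x y : W) (n : ℕ) (h : BrChainN cs n x y)
    (hx : cs.length x < cs.length (x * cs.simple c))
    (hy : cs.length (y * cs.simple c) < cs.length y) :
    BrChain cs (x * cs.simple c) y := by
  cases h with
  | refl => omega
  | @step n' x' y₀ t h0 ht hl =>
    by_cases hy0 : cs.length (y₀ * cs.simple c) < cs.length y₀
    · have ih := chain_absorb c x y₀ n' h0 hx hy0
      exact ih.step cs t ht hl
    · have hy0' : cs.length y₀ < cs.length (y₀ * cs.simple c) := by
        rcases cs.length_mul_simple y₀ c with h' | h' <;> omega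
      cases n' with
      | zero =>
        -- base case: single chain step; use strong exchange
        have hxy : x = y₀ := BrChainN_zero cs h0
        subst hxy
        obtain ⟨R, hRred, hR⟩ := cs.exists_reduced_word' ((x * t) * cs.simple c)
        have hlenR : R.length = cs.length ((x * t) * cs.simple c) := hRred ▸ (by rw [← hR])
        have hQprod : cs.wordProd (R ++ [c]) = x * t := by
          rw [cs.wordProd_append, cs.wordProd_singleton, ← hR, mul_assoc,
            cs.simple_mul_simple_self, mul_one]
        have hQred : cs.IsReduced (R ++ [c]) := by
          show cs.length (cs.wordProd (R ++ [c])) = (R ++ [c]).length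
          rw [hQprod]
          have h1 : cs.length ((x * t) * cs.simple c) + 1 = cs.length (x * t) := by
            rcases cs.length_mul_simple (x * t) c with h' | h' <;> omega
          simp only [List.length_append, List.length_singleton]
          omega
        have hexlt : cs.length (cs.wordProd (R ++ [c]) * t) < cs.length (cs.wordProd (R ++ [c])) := by
          rw [hQprod, mul_assoc, ht.mul_self, mul_one]
          exact hl
        obtain ⟨j, hj, hje⟩ := exchange_right cs (R ++ [c]) ht hexlt
        rw [hQprod, mul_assoc, ht.mul_self, mul_one] at hje
        by_cases hjR : j < R.length
        · have herase : (R ++ [c]).eraseIdx j = R.eraseIdx j ++ [c] :=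
            List.eraseIdx_append_of_lt_length hjR [c]
          rw [herase, cs.wordProd_append, cs.wordProd_singleton] at hje
          have hxs : x * cs.simple c = cs.wordProd (R.eraseIdx j) := by
            rw [← hje, mul_assoc, cs.simple_mul_simple_self, mul_one]
          obtain ⟨R', hR'sub, hR'red, hR'prod⟩ := exists_reduced_sublist cs (R.eraseIdx j)
          have hchain := chain_of_sublist R' R (hR'sub.trans (List.eraseIdx_sublist R j))
            hR'red hRred
          rw [hR'prod, ← hxs, ← hR] at hchain
          -- hchain : BrChain (x * s c) ((x * t) * s c); now step up by s c
          have hstep : cs.length ((x * t) * cs.simple c)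
              < cs.length (((x * t) * cs.simple c) * cs.simple c) := by
            rw [cs.simple_mul_simple_cancel_right]
            exact hy
          have := hchain.step cs (cs.simple c) (cs.isReflection_simple c) hstep
          rwa [cs.simple_mul_simple_cancel_right] at this
        · have hj' : R.length ≤ j := Nat.le_of_not_lt hjR
          have herase : (R ++ [c]).eraseIdx j = R := by
            have hjeq : j = R.length := by
              simp only [List.length_append, List.length_singleton] at hj
              omega
            subst hjeq
            rw [List.eraseIdx_append_of_length_le (Nat.le_refl _)]
            simp
          rw [herase, ← hR] at hje
          have hxt : x * cs.simple c = x * t := by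
            have h5 := congrArg (fun z => z * cs.simple c) hje
            rw [cs.simple_mul_simple_cancel_right] at h5
            exact h5.symm
          rw [hxt]
          exact BrChain.refl cs _
      | succ m =>
        have ih1 := chain_mul_simple c x y₀ (m + 1) h0 hx hy0'
        have h1step : BrChainN cs 1 y₀ (y₀ * t) := BrChainN.step t (BrChainN.refl y₀) ht hl
        have ih2 := chain_absorb c y₀ (y₀ * t) 1 h1step hy0' hy
        exact ih1.trans cs ih2
termination_by (cs.length y, 0, n)
decreasing_by
  all_goals simp_wf
  all_goals subst_vars
  all_goals try simp only [List.length_append, List.length_singleton, List.length_concat]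
  all_goals
    first
      | (apply Prod.Lex.left
         omega)
      | (apply Prod.Lex.right
         apply Prod.Lex.right
         omega)

/-- reduced subword gives a chain in Bruhat order -/
theorem chain_of_sublist (P Q : List B) (hsub : P.Sublist Q)
    (hP : cs.IsReduced P) (hQ : cs.IsReduced Q) :
    BrChain cs (cs.wordProd P) (cs.wordProd Q) := by
  rcases List.eq_nil_or_concat Q with rfl | ⟨Q₁, b, rfl⟩
  · rw [List.sublist_nil.mp hsub]
    exact BrChain.refl cs _
  · rw [List.concat_eq_append] at *
    have hQ₁red : cs.IsReduced Q₁ := by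
      have := CoxeterSystem.IsReduced.take hQ Q₁.length
      rwa [List.take_left] at this
    have hlQ : cs.length (cs.wordProd (Q₁ ++ [b])) = Q₁.length + 1 := by
      rw [hQ]; simp
    have hlQ₁ : cs.length (cs.wordProd Q₁) = Q₁.length := hQ₁red
    rw [List.sublist_append_iff] at hsub
    obtain ⟨P₁, P₂, rfl, h₁, h₂⟩ := hsub
    rcases List.sublist_singleton.mp h₂ with rfl | rfl
    · -- P avoids the last letter
      rw [List.append_nil] at hP ⊢
      have ihc := chain_of_sublist P₁ Q₁ h₁ hP hQ₁red
      have hstep : cs.length (cs.wordProd Q₁)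
          < cs.length (cs.wordProd Q₁ * cs.simple b) := by
        rw [← cs.wordProd_singleton, ← cs.wordProd_append, hlQ, hlQ₁]
        omega
      have := ihc.step cs (cs.simple b) (cs.isReflection_simple b) hstep
      rwa [← cs.wordProd_singleton, ← cs.wordProd_append] at this
    · -- P ends with the last letter
      have hP₁red : cs.IsReduced P₁ := by
        have := CoxeterSystem.IsReduced.take hP P₁.length
        rwa [List.take_left] at this
      obtain ⟨n, hn⟩ := chain_of_sublist P₁ Q₁ h₁ hP₁red hQ₁red
      have hlP : cs.length (cs.wordProd (P₁ ++ [b])) = P₁.length + 1 := by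
        rw [hP]; simp
      have hx : cs.length (cs.wordProd P₁)
          < cs.length (cs.wordProd P₁ * cs.simple b) := by
        rw [← cs.wordProd_singleton, ← cs.wordProd_append, hlP, hP₁red]
        omega
      have hy : cs.length (cs.wordProd Q₁)
          < cs.length (cs.wordProd Q₁ * cs.simple b) := by
        rw [← cs.wordProd_singleton, ← cs.wordProd_append, hlQ, hlQ₁]
        omega
      have := chain_mul_simple b (cs.wordProd P₁) (cs.wordProd Q₁) n hn hx hy
      rwa [← cs.wordProd_singleton, ← cs.wordProd_append, ← cs.wordProd_append] at this
termination_by (Q.length, 1, 0)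
decreasing_by
  all_goals simp_wf
  all_goals subst_vars
  all_goals try simp only [List.length_append, List.length_singleton, List.length_concat]
  all_goals
    first
      | (apply Prod.Lex.left
         omega)
      | (apply Prod.Lex.right
         apply Prod.Lex.right
         omega)

end

/-- The subword property: a reduced sublist of one reduced word gives Bruhat order. -/
theorem bruhatLe_of_reduced_sublist {P Q : List B} (hsub : P.Sublist Q)
    (hP : cs.IsReduced P) (hQ : cs.IsReduced Q) :
    BruhatLe cs (cs.wordProd P) (cs.wordProd Q) := by
  obtain ⟨n, hn⟩ := chain_of_sublist cs P Q hsub hP hQ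
  exact bruhatLe_of_brChainN cs n _ _ hn

theorem dmask_sublist (Q : List B) (F : Finset ℕ) : (dmask Q F).Sublist Q := by
  have h1 : (Q.zipIdx.filter fun p => p.2 ∉ F).Sublist Q.zipIdx := List.filter_sublist
  have h2 := h1.map Prod.fst
  rwa [List.zipIdx_map_fst] at h2

theorem dmask_append_notmem (Q' : List B) (a : B) (F : Finset ℕ) (h : Q'.length ∉ F) :
    dmask (Q' ++ [a]) F = dmask Q' F ++ [a] := by
  unfold dmask
  rw [List.zipIdx_append, List.filter_append, List.map_append]
  congr 1
  have : List.zipIdx [a] (0 + Q'.length) = [(a, Q'.length)] := by simp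
  rw [this]
  simp [h]

theorem dmask_append_mem (Q' : List B) (a : B) (F : Finset ℕ) (h : Q'.length ∈ F) :
    dmask (Q' ++ [a]) F = dmask Q' F := by
  unfold dmask
  rw [List.zipIdx_append, List.filter_append, List.map_append]
  have : List.zipIdx [a] (0 + Q'.length) = [(a, Q'.length)] := by simp
  rw [this]
  simp [h]

/-- If `Q = Q' ++ [a]` is a reduced word for `v`, `w * sₐ < w` and `w ≰ v * sₐ`, then no face
of `Δ(Q,w)` contains the last position, and `Δ(Q,w) = Δ(Q', w * sₐ)`. -/
theorem subword_complex_no_last (Q' : List B) (a : B) (v w : W)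
    (hQ : cs.IsReduced (Q' ++ [a])) (hv : cs.wordProd (Q' ++ [a]) = v)
    (hdesc : cs.length (w * cs.simple a) < cs.length w)
    (hnle : ¬ BruhatLe cs w (v * cs.simple a)) :
    (∀ F : Finset ℕ, IsFace cs (Q' ++ [a]) w F → Q'.length ∉ F) ∧
    (∀ F : Finset ℕ, IsFace cs (Q' ++ [a]) w F ↔ IsFace cs Q' (w * cs.simple a) F) := by
  have hQ'red : cs.IsReduced Q' := by
    have := CoxeterSystem.IsReduced.take hQ Q'.length
    rwa [List.take_left] at this
  have hπQ' : cs.wordProd Q' = v * cs.simple a := by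
    rw [← hv, cs.wordProd_append, cs.wordProd_singleton, cs.simple_mul_simple_cancel_right]
  have key : ∀ P : List B, P.Sublist Q' → cs.IsReduced P → cs.wordProd P = w → False := by
    intro P hs hr hp
    apply hnle
    have := bruhatLe_of_reduced_sublist cs hs hr hQ'red
    rwa [hp, hπQ'] at this
  have hlQ : (Q' ++ [a]).length = Q'.length + 1 := by simp
  have part1 : ∀ F : Finset ℕ, IsFace cs (Q' ++ [a]) w F → Q'.length ∉ F := by
    rintro F ⟨hFr, P, hPsub, hPred, hPprod⟩ hmem
    apply key P ?_ hPred hPprod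
    rw [dmask_append_mem Q' a F hmem] at hPsub
    exact hPsub.trans (dmask_sublist Q' F)
  refine ⟨part1, fun F => ⟨?_, ?_⟩⟩
  · rintro hF
    have hnm := part1 F hF
    obtain ⟨hFr, P, hPsub, hPred, hPprod⟩ := hF
    have hFr' : F ⊆ Finset.range Q'.length := by
      intro x hx
      have h1 := hFr hx
      rw [Finset.mem_range] at *
      rw [hlQ] at h1
      have : x ≠ Q'.length := fun h => hnm (h ▸ hx)
      omega
    rw [dmask_append_notmem Q' a F hnm] at hPsub
    rw [List.sublist_append_iff] at hPsub
    obtain ⟨P₁, P₂, rfl, h₁, h₂⟩ := hPsub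
    rcases List.sublist_singleton.mp h₂ with rfl | rfl
    · rw [List.append_nil] at hPred hPprod
      exact absurd (key P₁ (h₁.trans (dmask_sublist Q' F)) hPred hPprod) (by simp)
    · have hP₁red : cs.IsReduced P₁ := by
        have := CoxeterSystem.IsReduced.take hPred P₁.length
        rwa [List.take_left] at this
      have hP₁prod : cs.wordProd P₁ = w * cs.simple a := by
        rw [← hPprod, cs.wordProd_append, cs.wordProd_singleton,
          cs.simple_mul_simple_cancel_right]
      exact ⟨hFr', P₁, h₁, hP₁red, hP₁prod⟩
  · rintro ⟨hFr, P, hPsub, hPred, hPprod⟩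
    have hnm : Q'.length ∉ F := by
      intro h
      have := hFr h
      rw [Finset.mem_range] at this
      omega
    refine ⟨?_, P ++ [a], ?_, ?_, ?_⟩
    · intro x hx
      have := hFr hx
      rw [Finset.mem_range] at *
      omega
    · rw [dmask_append_notmem Q' a F hnm]
      exact hPsub.append (List.Sublist.refl _)
    · show cs.length (cs.wordProd (P ++ [a])) = (P ++ [a]).length
      rw [cs.wordProd_append, cs.wordProd_singleton, hPprod,
        cs.simple_mul_simple_cancel_right]
      have h1 : cs.length (w * cs.simple a) = P.length := hPprod ▸ hPred
      have h2 : cs.length (w * cs.simple a) + 1 = cs.length w := by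
        rcases cs.length_mul_simple w a with h' | h' <;> omega
      simp only [List.length_append, List.length_singleton]
      omega
    · rw [cs.wordProd_append, cs.wordProd_singleton, hPprod,
        cs.simple_mul_simple_cancel_right]
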